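/- Let n ≥ 1, λ > 0, A ∈ ℂ nonzero, ε ∈ ℂ with (2n+1)|ε| < 1, and define 𝔄(ξ) = [A (ξ/|ξ|)^{n+1} + ε \overline{A} (\overline{ξ}/|ξ|)^{n+1}] (ξ/|ξ|)^{-n} |ξ|^λ, 𝔄(0)=0. Then 𝔄 : ℂ → ℂ is injective. -/

import Mathlib

open Complex


lemma geom_bound (m : ℕ) (z : ℂ) (hz : ‖z‖ = 1) :
    ‖1 - z ^ m‖ ≤ m * ‖1 - z‖ := by
  have h : 1 - z ^ m = (1 - z) * ∑ i ∈ Finset.range m, z ^ i := by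
    have := geom_sum_mul z m
    linear_combination this
  rw [h, norm_mul, mul_comm]
  gcongr
  calc ‖∑ i ∈ Finset.range m, z ^ i‖
      ≤ ∑ i ∈ Finset.range m, ‖z ^ i‖ := norm_sum_le _ _
    _ = m := by simp [map_pow, hz]

lemma re_bound (m : ℕ) (z : ℂ) (hz : ‖z‖ = 1) :
    1 - (z ^ m).re ≤ (m : ℝ) ^ 2 * (1 - z.re) := by
  have h := geom_bound m z hz
  have hn1 : Complex.normSq z = 1 := by rw [← Complex.sq_norm, hz]; norm_num
  have hn2 : Complex.normSq (z ^ m) = 1 := by rw [← Complex.sq_norm, norm_pow, hz]; norm_num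
  have h1 : ‖1 - z‖ ^ 2 = 2 * (1 - z.re) := by
    rw [Complex.sq_norm, Complex.normSq_sub]
    simp [hn1]; ring
  have h2 : ‖1 - z ^ m‖ ^ 2 = 2 * (1 - (z ^ m).re) := by
    rw [Complex.sq_norm, Complex.normSq_sub]
    simp only [Complex.normSq_one, hn2, one_mul, ← map_pow, Complex.conj_re]
    ring
  nlinarith [norm_nonneg (1 - z), norm_nonneg (1 - z ^ m)]

lemma normdiff (a b : ℝ) (u v : ℂ) (hu : ‖u‖ = 1) (hv : ‖v‖ = 1) :
    ‖(a : ℂ) * u - (b : ℂ) * v‖ ^ 2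
      = a ^ 2 + b ^ 2 - 2 * (a * b) * (u * (starRingEnd ℂ) v).re := by
  have hnu : Complex.normSq u = 1 := by rw [← Complex.sq_norm, hu]; norm_num
  have hnv : Complex.normSq v = 1 := by rw [← Complex.sq_norm, hv]; norm_num
  rw [Complex.sq_norm, Complex.normSq_sub]
  have e1 : Complex.normSq ((a : ℂ) * u) = a ^ 2 := by
    rw [Complex.normSq_mul, hnu, Complex.normSq_ofReal]; ring
  have e2 : Complex.normSq ((b : ℂ) * v) = b ^ 2 := by
    rw [Complex.normSq_mul, hnv, Complex.normSq_ofReal]; ring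
  have e3 : ((a : ℂ) * u * (starRingEnd ℂ) ((b : ℂ) * v)).re
      = a * b * (u * (starRingEnd ℂ) v).re := by
    have : (a : ℂ) * u * (starRingEnd ℂ) ((b : ℂ) * v)
        = ((a * b : ℝ) : ℂ) * (u * (starRingEnd ℂ) v) := by
      simp [map_mul, Complex.conj_ofReal]; ring
    rw [this, Complex.re_ofReal_mul]
  rw [e1, e2, e3]; ring

lemma lip (m : ℕ) (hm : 1 ≤ m) (a b : ℝ) (ha : 0 ≤ a) (hb : 0 ≤ b) (u v : ℂ)
    (hu : ‖u‖ = 1) (hv : ‖v‖ = 1) :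
    ‖(a : ℂ) * (starRingEnd ℂ) u ^ m - (b : ℂ) * (starRingEnd ℂ) v ^ m‖
      ≤ m * ‖(a : ℂ) * u - (b : ℂ) * v‖ := by
  set p := u * (starRingEnd ℂ) v with hp
  have hpabs : ‖p‖ = 1 := by
    rw [hp, norm_mul, Complex.norm_conj, hu, hv]; ring
  have hcu : ‖(starRingEnd ℂ) u ^ m‖ = 1 := by
    rw [norm_pow, Complex.norm_conj, hu, one_pow]
  have hcv : ‖(starRingEnd ℂ) v ^ m‖ = 1 := by
    rw [norm_pow, Complex.norm_conj, hv, one_pow]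
  have key : ((starRingEnd ℂ) u ^ m * (starRingEnd ℂ) ((starRingEnd ℂ) v ^ m)).re
      = (p ^ m).re := by
    have : (starRingEnd ℂ) u ^ m * (starRingEnd ℂ) ((starRingEnd ℂ) v ^ m)
        = (starRingEnd ℂ) (p ^ m) := by
      simp [hp, map_pow, map_mul, mul_pow]
    rw [this, Complex.conj_re]
  have h1 := normdiff a b ((starRingEnd ℂ) u ^ m) ((starRingEnd ℂ) v ^ m) hcu hcv
  have h2 := normdiff a b u v hu hv
  rw [key] at h1
  have hre := re_bound m p hpabs
  have hrele : p.re ≤ 1 := by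
    calc p.re ≤ ‖p‖ := Complex.re_le_norm p
    _ = 1 := hpabs
  have hm2 : (1 : ℝ) ≤ (m : ℝ) ^ 2 := by
    have : (1 : ℝ) ≤ (m : ℝ) := by exact_mod_cast hm
    nlinarith
  have hsq : ‖(a : ℂ) * (starRingEnd ℂ) u ^ m - (b : ℂ) * (starRingEnd ℂ) v ^ m‖ ^ 2
      ≤ ((m : ℝ) * ‖(a : ℂ) * u - (b : ℂ) * v‖) ^ 2 := by
    rw [h1]
    nlinarith [h2, mul_le_mul_of_nonneg_left hre (mul_nonneg ha hb), sq_nonneg (a - b),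
      hm2, mul_nonneg ha hb, hrele]
  have hL := norm_nonneg ((a : ℂ) * (starRingEnd ℂ) u ^ m - (b : ℂ) * (starRingEnd ℂ) v ^ m)
  have hR : (0 : ℝ) ≤ (m : ℝ) * ‖(a : ℂ) * u - (b : ℂ) * v‖ :=
    mul_nonneg (Nat.cast_nonneg m) (norm_nonneg _)
  nlinarith


/-- The leading term `𝔄` of the hodographic representation. -/
noncomputable def frakA (n : ℕ) (lam : ℝ) (A ε : ℂ) (ξ : ℂ) : ℂ :=
  if ξ = 0 then 0 else
    (A * (ξ / (‖ξ‖ : ℝ)) ^ (n + 1) +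
        ε * (starRingEnd ℂ) A * ((starRingEnd ℂ) ξ / (‖ξ‖ : ℝ)) ^ (n + 1)) *
      (ξ / (‖ξ‖ : ℝ)) ^ (-(n : ℤ)) * ((‖ξ‖ ^ lam : ℝ) : ℂ)


lemma abs_unit (ξ : ℂ) (hξ : ξ ≠ 0) : ‖ξ / (‖ξ‖ : ℝ)‖ = 1 := by
  rw [norm_div, Complex.norm_real, Real.norm_eq_abs, _root_.abs_of_nonneg (norm_nonneg ξ),
    div_self (norm_ne_zero_iff.mpr hξ)]

lemma frakA_eq (n : ℕ) (lam : ℝ) (A ε : ℂ) (ξ : ℂ) (hξ : ξ ≠ 0) :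
    frakA n lam A ε ξ = ((‖ξ‖ ^ lam : ℝ) : ℂ) *
      (A * (ξ / (‖ξ‖ : ℝ)) +
        ε * (starRingEnd ℂ) A * ((starRingEnd ℂ) (ξ / (‖ξ‖ : ℝ))) ^ (2 * n + 1)) := by
  set u : ℂ := ξ / (‖ξ‖ : ℝ) with hudef
  have hu1 : ‖u‖ = 1 := abs_unit ξ hξ
  have huc : u * (starRingEnd ℂ) u = 1 := by
    rw [Complex.mul_conj]
    norm_cast
    rw [← Complex.sq_norm, hu1]; norm_num
  have hinv : u⁻¹ = (starRingEnd ℂ) u := inv_eq_of_mul_eq_one_right huc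
  have hz : u ^ (-(n : ℤ)) = ((starRingEnd ℂ) u) ^ n := by
    rw [zpow_neg, zpow_natCast, ← inv_pow, hinv]
  have hconj : ((starRingEnd ℂ) ξ / (‖ξ‖ : ℝ) : ℂ) = (starRingEnd ℂ) u := by
    rw [hudef, map_div₀, Complex.conj_ofReal]
  rw [frakA, if_neg hξ, hconj, hz]
  set cu := (starRingEnd ℂ) u
  have e1 : u ^ (n + 1) * cu ^ n = u := by
    calc u ^ (n + 1) * cu ^ n = u * (u * cu) ^ n := by ring
    _ = u := by rw [huc, one_pow, mul_one]
  calc (A * u ^ (n + 1) + ε * (starRingEnd ℂ) A * cu ^ (n + 1)) * cu ^ n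
        * ((‖ξ‖ ^ lam : ℝ) : ℂ)
      = ((‖ξ‖ ^ lam : ℝ) : ℂ) *
          (A * (u ^ (n + 1) * cu ^ n) + ε * (starRingEnd ℂ) A * cu ^ (2 * n + 1)) := by ring
    _ = _ := by rw [e1]

theorem frakA_injective (n : ℕ) (lam : ℝ) (A ε : ℂ)
    (hn : 1 ≤ n) (hlam : 0 < lam) (hA : A ≠ 0) (hε : (2 * (n : ℝ) + 1) * ‖ε‖ < 1) :
    Function.Injective (frakA n lam A ε) := by
  have hεnn := norm_nonneg ε
  have hε1 : ‖ε‖ < 1 := by nlinarith [Nat.cast_nonneg (α := ℝ) n]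
  have hAp : 0 < ‖A‖ := (norm_pos_iff.mpr hA)
  -- nonvanishing away from 0
  have key : ∀ ζ : ℂ, ζ ≠ 0 → frakA n lam A ε ζ ≠ 0 := by
    intro ζ hζ
    rw [frakA_eq n lam A ε ζ hζ]
    have ha : (0 : ℝ) < ‖ζ‖ ^ lam := Real.rpow_pos_of_pos ((norm_pos_iff.mpr hζ)) lam
    have hu1 : ‖ζ / (‖ζ‖ : ℝ)‖ = 1 := abs_unit ζ hζ
    refine mul_ne_zero (by exact_mod_cast ha.ne') ?_
    intro h0
    have h1 : A * (ζ / (‖ζ‖ : ℝ))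
        = -(ε * (starRingEnd ℂ) A * ((starRingEnd ℂ) (ζ / (‖ζ‖ : ℝ))) ^ (2 * n + 1)) := by
      linear_combination h0
    have h2 := congrArg (fun z : ℂ => ‖z‖) h1
    rw [norm_mul, hu1, mul_one, norm_neg, norm_mul, norm_mul, norm_pow, Complex.norm_conj,
      Complex.norm_conj, hu1, one_pow, mul_one] at h2
    nlinarith
  intro ξ ζ hEq
  by_cases hξ : ξ = 0
  · by_cases hζ : ζ = 0
    · rw [hξ, hζ]
    · exfalso; apply key ζ hζ
      rw [← hEq, hξ, frakA, if_pos rfl]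
  · by_cases hζ : ζ = 0
    · exfalso; apply key ξ hξ
      rw [hEq, hζ, frakA, if_pos rfl]
    · -- both nonzero
      set a : ℝ := ‖ξ‖ ^ lam with hadef
      set b : ℝ := ‖ζ‖ ^ lam with hbdef
      have hap : (0 : ℝ) < a := Real.rpow_pos_of_pos ((norm_pos_iff.mpr hξ)) lam
      have hbp : (0 : ℝ) < b := Real.rpow_pos_of_pos ((norm_pos_iff.mpr hζ)) lam
      set u : ℂ := ξ / (‖ξ‖ : ℝ) with hudef
      set v : ℂ := ζ / (‖ζ‖ : ℝ) with hvdef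
      have hu1 : ‖u‖ = 1 := abs_unit ξ hξ
      have hv1 : ‖v‖ = 1 := abs_unit ζ hζ
      rw [frakA_eq n lam A ε ξ hξ, frakA_eq n lam A ε ζ hζ] at hEq
      set m := 2 * n + 1 with hmdef
      have hre : A * ((a : ℂ) * u - (b : ℂ) * v)
          = -ε * ((starRingEnd ℂ) A) *
            ((a : ℂ) * ((starRingEnd ℂ) u) ^ m - (b : ℂ) * ((starRingEnd ℂ) v) ^ m) := by
        linear_combination hEq
      have habs := congrArg (fun z : ℂ => ‖z‖) hre
      rw [norm_mul, norm_mul, norm_mul, Complex.norm_conj, norm_neg] at habs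
      have hlip := lip m (by omega) a b hap.le hbp.le u v hu1 hv1
      have hG0 : ‖(a : ℂ) * u - (b : ℂ) * v‖ = 0 := by
        by_contra hG
        have hGpos : 0 < ‖(a : ℂ) * u - (b : ℂ) * v‖ :=
          lt_of_le_of_ne (norm_nonneg _) (Ne.symm hG)
        have hmcast : (m : ℝ) = 2 * (n : ℝ) + 1 := by
          rw [hmdef]; push_cast; ring
        rw [hmcast] at hlip
        nlinarith [mul_le_mul_of_nonneg_left hlip (mul_nonneg hεnn hAp.le),
          mul_lt_mul_of_pos_right hε (mul_pos hAp hGpos)]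
      have hGeq : (a : ℂ) * u = (b : ℂ) * v :=
        sub_eq_zero.mp (norm_eq_zero.mp hG0)
      have hab : a = b := by
        have h := congrArg (fun z : ℂ => ‖z‖) hGeq
        rw [norm_mul, norm_mul, hu1, hv1, mul_one, mul_one, Complex.norm_real, Real.norm_eq_abs,
          Complex.norm_real, Real.norm_eq_abs, _root_.abs_of_pos hap, _root_.abs_of_pos hbp] at h
        exact h
      have habsξζ : ‖ξ‖ = ‖ζ‖ := by
        by_contra hne
        rcases lt_or_gt_of_ne hne with h | h
        · exact absurd hab (Real.rpow_lt_rpow (norm_nonneg ξ) h hlam).ne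
        · exact absurd hab (Real.rpow_lt_rpow (norm_nonneg ζ) h hlam).ne'
      have huv : u = v := by
        refine mul_left_cancel₀ (show ((a : ℝ) : ℂ) ≠ 0 by exact_mod_cast hap.ne') ?_
        rw [hGeq, hab]
      have hcξ : ((‖ξ‖ : ℝ) : ℂ) ≠ 0 := by
        exact_mod_cast (norm_ne_zero_iff.mpr hξ)
      have hcζ : ((‖ζ‖ : ℝ) : ℂ) ≠ 0 := by
        exact_mod_cast (norm_ne_zero_iff.mpr hζ)
      have h1 : ((‖ξ‖ : ℝ) : ℂ) * u = ξ := by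
        rw [hudef, mul_comm]; exact div_mul_cancel₀ ξ hcξ
      have h2 : ((‖ζ‖ : ℝ) : ℂ) * v = ζ := by
        rw [hvdef, mul_comm]; exact div_mul_cancel₀ ζ hcζ
      rw [← h1, ← h2, habsξζ, huv]
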